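/- Let H and G be real Hilbert spaces, let L : H → G be a bounded linear operator such that L L* = χ I for some χ > 0, and let φ : G → ℝ ∪ {+∞} be any function. Fix v ∈ H and suppose p ∈ G minimizes the function u ↦ χ φ(u) + (1/2)‖u − L v‖² over G. Then the point w = v + χ⁻¹ L*(p − L v) minimizes the function u ↦ φ(L u) + (1/2)‖u − v‖² over H; in other words, prox_{φ∘L}(v) = v + χ⁻¹ L*(prox_{χφ}(L v) − L v). -/

import Mathlib

open ContinuousLinearMap

/-- Proximity operator of a composition with a semi-orthogonal linear operator
(`L L* = χ I`, `χ > 0`): if `p` minimizes `u ↦ χ φ(u) + (1/2)‖u - L v‖²` over `G`, then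
`w = v + χ⁻¹ L*(p - L v)` minimizes `u ↦ φ(L u) + (1/2)‖u - v‖²` over `H`; i.e.
`prox_{φ∘L}(v) = v + χ⁻¹ L*(prox_{χφ}(L v) - L v)`. -/
theorem prox_composition_semiorthogonal
    {H G : Type*}
    [NormedAddCommGroup H] [InnerProductSpace ℝ H] [CompleteSpace H]
    [NormedAddCommGroup G] [InnerProductSpace ℝ G] [CompleteSpace G]
    (L : H →L[ℝ] G) (χ : ℝ) (hχ : 0 < χ)
    (hL : L ∘L adjoint L = χ • ContinuousLinearMap.id ℝ G)
    (φ : G → EReal) (hφ : ∀ u, φ u ≠ ⊥)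
    (v : H) (p : G)
    (hp : ∀ u : G,
      (χ : EReal) * φ p + (((1 / 2) * ‖p - L v‖ ^ 2 : ℝ) : EReal) ≤
        (χ : EReal) * φ u + (((1 / 2) * ‖u - L v‖ ^ 2 : ℝ) : EReal)) :
    ∀ u : H,
      φ (L (v + χ⁻¹ • adjoint L (p - L v))) +
          (((1 / 2) * ‖v + χ⁻¹ • adjoint L (p - L v) - v‖ ^ 2 : ℝ) : EReal) ≤
        φ (L u) + (((1 / 2) * ‖u - v‖ ^ 2 : ℝ) : EReal) := by
  intro u
  have hLL : ∀ y : G, L (adjoint L y) = χ • y := by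
    intro y
    have := ContinuousLinearMap.ext_iff.mp hL y
    simpa using this
  have hLw : L (v + χ⁻¹ • adjoint L (p - L v)) = p := by
    rw [map_add, map_smul, hLL, smul_smul, inv_mul_cancel₀ hχ.ne', one_smul]
    abel
  have hadj : ∀ y : G, ‖adjoint L y‖ ^ 2 = χ * ‖y‖ ^ 2 := by
    intro y
    have h1 : ‖adjoint L y‖ ^ 2 = inner ℝ (adjoint L y) (adjoint L y) :=
      (real_inner_self_eq_norm_sq _).symm
    rw [h1, ContinuousLinearMap.adjoint_inner_left, hLL, real_inner_smul_right,
      real_inner_self_eq_norm_sq]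
  have hnw : ‖v + χ⁻¹ • adjoint L (p - L v) - v‖ ^ 2 = χ⁻¹ * ‖p - L v‖ ^ 2 := by
    have h0 : v + χ⁻¹ • adjoint L (p - L v) - v = χ⁻¹ • adjoint L (p - L v) := by abel
    rw [h0, norm_smul, mul_pow, hadj, Real.norm_eq_abs, abs_of_pos (inv_pos.mpr hχ)]
    field_simp
  have hLle : ‖L u - L v‖ ^ 2 ≤ χ * ‖u - v‖ ^ 2 := by
    rw [← map_sub]
    set x := u - v with hx
    have h1 : ((‖L x‖ ^ 2 : ℝ)) = inner ℝ (adjoint L (L x)) x := by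
      rw [ContinuousLinearMap.adjoint_inner_left, real_inner_self_eq_norm_sq]
    have h2 : |(inner ℝ (adjoint L (L x)) x : ℝ)| ≤ ‖adjoint L (L x)‖ * ‖x‖ :=
      abs_real_inner_le_norm _ _
    have h3 : ‖adjoint L (L x)‖ ^ 2 = χ * ‖L x‖ ^ 2 := hadj _
    have h4 : ‖L x‖ ^ 2 ≤ ‖adjoint L (L x)‖ * ‖x‖ := h1.le.trans ((abs_le.mp h2).2)
    have h5 : (‖L x‖ ^ 2) ^ 2 ≤ (‖adjoint L (L x)‖ * ‖x‖) ^ 2 :=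
      pow_le_pow_left₀ (sq_nonneg _) h4 2
    have h6 : (‖L x‖ ^ 2) ^ 2 ≤ ‖L x‖ ^ 2 * (χ * ‖x‖ ^ 2) := by
      calc (‖L x‖ ^ 2) ^ 2 ≤ (‖adjoint L (L x)‖ * ‖x‖) ^ 2 := h5
        _ = ‖adjoint L (L x)‖ ^ 2 * ‖x‖ ^ 2 := by ring
        _ = ‖L x‖ ^ 2 * (χ * ‖x‖ ^ 2) := by rw [h3]; ring
    by_cases hA : ‖L x‖ ^ 2 = 0
    · rw [hA]
      positivity
    · have hApos : 0 < ‖L x‖ ^ 2 := lt_of_le_of_ne (sq_nonneg _) (Ne.symm hA)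
      have h7 : ‖L x‖ ^ 2 * ‖L x‖ ^ 2 ≤ ‖L x‖ ^ 2 * (χ * ‖x‖ ^ 2) := by
        calc ‖L x‖ ^ 2 * ‖L x‖ ^ 2 = (‖L x‖ ^ 2) ^ 2 := by ring
          _ ≤ _ := h6
      exact le_of_mul_le_mul_left h7 hApos
  rw [hLw, hnw]
  by_cases hb : φ (L u) = ⊤
  · rw [hb, EReal.top_add_of_ne_bot (EReal.coe_ne_bot _)]
    exact le_top
  · have hr : ((φ (L u)).toReal : EReal) = φ (L u) := EReal.coe_toReal hb (hφ _)
    have hpu := hp (L u)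
    rw [← hr] at hpu ⊢
    have hptop : φ p ≠ ⊤ := by
      intro htop
      rw [htop] at hpu
      have : (χ : EReal) * ⊤ = ⊤ := by
        rw [EReal.mul_top_of_pos]
        exact_mod_cast hχ
      rw [this, EReal.top_add_of_ne_bot (by exact_mod_cast EReal.coe_ne_bot _)] at hpu
      have := hpu.trans_lt (by
        rw [← EReal.coe_mul, ← EReal.coe_add]
        exact EReal.coe_lt_top _)
      exact absurd this (lt_irrefl _)
    have hs : ((φ p).toReal : EReal) = φ p := EReal.coe_toReal hptop (hφ _)
    rw [← hs] at hpu ⊢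
    set s := (φ p).toReal
    set r := (φ (L u)).toReal
    rw [← EReal.coe_mul, ← EReal.coe_mul, ← EReal.coe_add, ← EReal.coe_add,
      EReal.coe_le_coe_iff] at hpu
    rw [← EReal.coe_add, ← EReal.coe_add, EReal.coe_le_coe_iff]
    have hχi : 0 < χ⁻¹ := inv_pos.mpr hχ
    have h6 : χ * s + 1 / 2 * ‖p - L v‖ ^ 2 ≤ χ * r + 1 / 2 * (χ * ‖u - v‖ ^ 2) := by
      linarith [hLle]
    have h7 := mul_le_mul_of_nonneg_left h6 hχi.le
    have e1 : χ⁻¹ * (χ * s + 1 / 2 * ‖p - L v‖ ^ 2) = s + 1 / 2 * (χ⁻¹ * ‖p - L v‖ ^ 2) := by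
      field_simp
    have e2 : χ⁻¹ * (χ * r + 1 / 2 * (χ * ‖u - v‖ ^ 2)) = r + 1 / 2 * ‖u - v‖ ^ 2 := by
      field_simp
    linarith
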